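/- For all integers I ≥ 1 and S ≥ 1 such that I ≤ S or I + S is even, P(I,S) = Σ_{j=L}^{⌊I/2⌋} (∏_{k=0}^{I−j−1} 1/(I+S−1−2k)) · ((1/j!)·∏_{k=1}^{j} C(I−2(k−1),2)) · ((I−2j)! · C(S−1, I−1−2j)), where L = (I−S)/2 if I > S and L = 0 otherwise, and C(S−1, I−1−2j) is taken to be 0 when I−1−2j < 0. -/

import Mathlib

/-- `P I S` is the probability that a fixed clean mobile gets infected in the
Bluetooth malware model with `I` infected and `S` clean mobiles. -/
def P : ℕ → ℕ → ℚ
  | 0, _ => 0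
  | _ + 1, 0 => 0
  | I + 1, S + 1 =>
      1 / ((I : ℚ) + S + 1) + ((S : ℚ) / ((I : ℚ) + S + 1)) * P I S +
        ((I : ℚ) / ((I : ℚ) + S + 1)) * P (I - 1) (S + 1)
  termination_by I _ => I

/-- Double factorial `n‼`; with natural subtraction as argument this also
implements the convention `(-1)‼ = 0‼ = 1`. -/
def dfact : ℕ → ℕ
  | 0 => 1
  | 1 => 1
  | n + 2 => (n + 2) * dfact n
/-- `mm s = dfact (s-1)`. -/
def mm : ℕ → ℕ
  | 0 => 1
  | 1 => 1
  | s + 2 => (s + 1) * mm s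

@[simp] lemma mm_zero : mm 0 = 1 := rfl
@[simp] lemma mm_one : mm 1 = 1 := rfl
lemma mm_succ_succ (s : ℕ) : mm (s + 2) = (s + 1) * mm s := rfl

lemma mm_pos (s : ℕ) : 0 < mm s := by
  induction s using Nat.strong_induction_on with
  | _ s ih =>
    match s with
    | 0 => simp
    | 1 => simp
    | s + 2 => rw [mm_succ_succ]; exact Nat.mul_pos (by omega) (ih s (by omega))

open Nat in
def T (a b j : ℕ) : ℕ :=
  a.choose (2*j) * b.choose (a - 2*j) * (a - 2*j)! * mm (2*j) * mm (b - (a - 2*j))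

def f (a b : ℕ) : ℕ := ∑ j ∈ Finset.range (a/2 + 1), T a b j

lemma T_step (a b j : ℕ) :
    T (a+2) (b+1) j
      = (b+1) * T (a+1) b j + (a+1) * (if j = 0 then 0 else T a (b+1) (j-1)) := by
  match j with
  | 0 =>
    rw [if_pos rfl]
    simp only [T, Nat.mul_zero, Nat.sub_zero, Nat.choose_zero_right, one_mul, mm_zero, mul_one,
      mul_zero, add_zero]
    have h2 : b + 1 - (a + 2) = b - (a + 1) := by omega
    rw [h2, Nat.factorial_succ (a+1)]
    have key : (b+1) * b.choose (a+1) = (b+1).choose (a+2) * (a+2) :=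
      Nat.add_one_mul_choose_eq b (a+1)
    zify at key ⊢
    linear_combination (-((a+1).factorial : ℤ)) * (mm (b - (a+1)) : ℤ) * key
  | j + 1 =>
    rw [if_neg (Nat.succ_ne_zero j), Nat.add_sub_cancel]
    by_cases ht : 2*(j+1) ≤ a + 1
    · set t : ℕ := a + 1 - 2*(j+1) with htdef
      simp only [T]
      have e1 : a + 2 - 2*(j+1) = t + 1 := by omega
      have e2 : a - 2*j = t + 1 := by omega
      have e2' : a + 1 - 2*(j+1) = t := rfl
      have e3 : b + 1 - (t + 1) = b - t := by omega
      rw [e1, e2, e2', e3, Nat.factorial_succ t,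
        show 2*(j+1) = (2*j)+2 from by ring, mm_succ_succ (2*j)]
      have k1 : (b+1) * b.choose t = (b+1).choose (t+1) * (t+1) :=
        Nat.add_one_mul_choose_eq b t
      have k2 : (a+1) * a.choose (2*j) = (a+1).choose (2*j+1) * (2*j+1) :=
        Nat.add_one_mul_choose_eq a (2*j)
      have k3 : (a+2).choose (2*j+2) = (a+1).choose (2*j+1) + (a+1).choose (2*j+2) := by
        exact Nat.choose_succ_succ (a+1) (2*j+1)
      zify at k1 k2 k3 ⊢
      linear_combination
        (((b+1).choose (t+1) : ℤ) * ((t+1) * (t).factorial : ℤ) * (2*j+1) * (mm (2*j)) * (mm (b-t))) * k3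
        - (((a+1).choose (2*j+2) : ℤ) * ((t).factorial : ℤ) * (2*j+1) * (mm (2*j)) * (mm (b-t))) * k1
        - (((b+1).choose (t+1) : ℤ) * ((t+1) * (t).factorial : ℤ) * (mm (2*j)) * (mm (b-t))) * k2
    · rcases Nat.lt_or_ge (a+2) (2*(j+1)) with h | h
      · have z1 : (a+2).choose (2*(j+1)) = 0 := Nat.choose_eq_zero_of_lt h
        have z2 : (a+1).choose (2*(j+1)) = 0 := Nat.choose_eq_zero_of_lt (by omega)
        have z3 : a.choose (2*j) = 0 := Nat.choose_eq_zero_of_lt (by omega)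
        simp [T, z1, z2, z3]
      · have ha : a = 2*j := by omega
        subst ha
        have z2 : (2*j+1).choose (2*(j+1)) = 0 := Nat.choose_eq_zero_of_lt (by omega)
        simp only [T, z2, Nat.choose_self, Nat.zero_mul, zero_mul, mul_zero, zero_add, Nat.mul_zero]
        have e1 : 2*j + 2 - 2*(j+1) = 0 := by omega
        have e2 : 2*j - 2*j = 0 := by omega
        rw [e1, e2, show 2*(j+1) = (2*j)+2 from by ring, mm_succ_succ (2*j)]
        simp [Nat.choose_self]
        ring


lemma T_high (a b j : ℕ) (h : a < 2*j) : T a b j = 0 := by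
  simp [T, Nat.choose_eq_zero_of_lt h]

lemma f_rec (a b : ℕ) : f (a+2) (b+1) = (b+1) * f (a+1) b + (a+1) * f a (b+1) := by
  have hN : (a+2)/2 + 1 = (a/2 + 1) + 1 := by omega
  rw [f, hN]
  have : ∀ j ∈ Finset.range (a/2+2), T (a+2) (b+1) j
      = (b+1) * T (a+1) b j + (a+1) * (if j = 0 then 0 else T a (b+1) (j-1)) :=
    fun j _ => T_step a b j
  rw [Finset.sum_congr rfl this, Finset.sum_add_distrib, ← Finset.mul_sum, ← Finset.mul_sum]
  congr 1
  · congr 1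
    rw [f]
    rcases Nat.even_or_odd a with ⟨c, hc⟩ | ⟨c, hc⟩
    · subst hc
      have h1 : (c+c+1)/2 + 1 = (c+c)/2 + 1 := by omega
      rw [h1, Finset.sum_range_succ, T_high (c+c+1) b ((c+c)/2+1) (by omega), add_zero]
    · subst hc
      have h1 : (2*c+1+1)/2 + 1 = (2*c+1)/2 + 2 := by omega
      rw [h1]
  · congr 1
    rw [Finset.sum_range_succ' _ (a/2+1)]
    simp [f]

lemma f_eq (a : ℕ) : ∀ b : ℕ, (a ≤ b ∨ Even (a + b)) → f a b = mm (a + b) := by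
  induction a using Nat.strong_induction_on with
  | _ a ih =>
    match a with
    | 0 =>
      intro b _
      simp [f, T]
    | 1 =>
      intro b hb
      match b with
      | 0 => rcases hb with h | h; · omega
             · exact absurd h (by decide)
      | b + 1 =>
        rw [show 1+(b+1) = b+2 from by omega, mm_succ_succ b]
        simp [f, T, Nat.choose_one_right]
    | a + 2 =>
      intro b hb
      match b with
      | 0 =>
        have hev : Even a := by
          rcases hb with h | h; · omega
          · simpa [Nat.even_add] using h
        obtain ⟨c, hc⟩ := hev
        subst hc
        rw [f, Nat.add_zero]
        have hn : (c+c+2)/2 + 1 = c + 2 := by omega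
        rw [hn, Finset.sum_eq_single (c+1)]
        · simp only [T]
          have e1 : 2*(c+1) = c+c+2 := by ring
          rw [e1, Nat.choose_self, Nat.sub_self]
          simp
        · intro j hj hne
          have hj' : j ≤ c := by
            simp only [Finset.mem_range] at hj; omega
          have : 0 < c+c+2 - 2*j := by omega
          simp [T, Nat.choose_eq_zero_of_lt this]
        · intro h; exact absurd (Finset.self_mem_range_succ (c+1)) h
      | b + 1 =>
        rw [f_rec]
        have h1 : f (a+1) b = mm (a+1+b) := by
          apply ih (a+1) (by omega)
          rcases hb with h | h
          · left; omega
          · right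
            simp only [Nat.even_iff] at h ⊢
            omega
        have h2 : f a (b+1) = mm (a+(b+1)) := by
          apply ih a (by omega)
          rcases hb with h | h
          · left; omega
          · right
            simp only [Nat.even_iff] at h ⊢
            omega
        rw [h1, h2, show a+1+b = a+b+1 from by ring, show a+(b+1) = a+b+1 from by ring,
          show a+2+(b+1) = (a+b+1)+2 from by ring, mm_succ_succ (a+b+1)]
        ring

open Nat in
lemma pc1 (I : ℕ) : ∀ j, 2*j ≤ I →
    (∏ k ∈ Finset.range j, (I - 2*k).choose 2) * (I - 2*j)! * 2^j = I ! := by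
  intro j
  induction j with
  | zero => simp
  | succ j ih =>
    intro hj
    rw [Finset.prod_range_succ]
    have hI : I - 2*j = (I - 2*(j+1)) + 2 := by omega
    have key : ((I - 2*(j+1)) + 2).choose 2 * 2 * (I - 2*(j+1))! = ((I - 2*(j+1)) + 2)! := by
      have h := Nat.choose_mul_factorial_mul_factorial (show 2 ≤ (I - 2*(j+1)) + 2 by omega)
      simpa [Nat.add_sub_cancel, Nat.factorial] using h
    calc (∏ k ∈ Finset.range j, (I - 2*k).choose 2) * (I - 2*j).choose 2 * (I - 2*(j+1))! * 2^(j+1)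
        = (∏ k ∈ Finset.range j, (I - 2*k).choose 2) *
            ((I - 2*j).choose 2 * 2 * (I - 2*(j+1))!) * 2^j := by ring
      _ = (∏ k ∈ Finset.range j, (I - 2*k).choose 2) * (I - 2*j)! * 2^j := by
            rw [hI, key]
      _ = I ! := ih (by omega)

open Nat in
lemma pm (j : ℕ) : mm (2*j) * 2^j * j ! = (2*j)! := by
  induction j with
  | zero => simp
  | succ j ih =>
    have h1 : 2*(j+1) = (2*j) + 2 := by ring
    rw [h1, mm_succ_succ, Nat.factorial_succ, show (2*j)+2 = (2*j+1)+1 from rfl,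
      Nat.factorial_succ (2*j+1), Nat.factorial_succ (2*j)]
    calc (2*j+1) * mm (2*j) * 2^(j+1) * ((j+1) * j !)
        = ((2*j+1) * (2*(j+1))) * (mm (2*j) * 2^j * j !) := by ring
      _ = (2*j+1+1) * ((2*j+1) * (2*j)!) := by rw [ih]; ring

open Nat in
lemma prod_choose (a j : ℕ) (hj : 2*j ≤ a) :
    (∏ k ∈ Finset.range j, (a + 1 - 2*k).choose 2) * (a + 1 - 2*j)!
      = (a+1) * (a.choose (2*j) * (a - 2*j)! * mm (2*j) * j !) := by
  apply Nat.eq_of_mul_eq_mul_right (show 0 < 2^j from Nat.pow_pos (by norm_num))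
  calc (∏ k ∈ Finset.range j, (a + 1 - 2*k).choose 2) * (a + 1 - 2*j)! * 2^j
      = (a+1)! := pc1 (a+1) j (by omega)
    _ = (a+1) * ((a.choose (2*j) * (2*j)! * (a - 2*j)!)) := by
        rw [Nat.choose_mul_factorial_mul_factorial hj, Nat.factorial_succ]
    _ = (a+1) * (a.choose (2*j) * (a - 2*j)! * (mm (2*j) * 2^j * j !)) := by rw [pm]; ring
    _ = (a+1) * (a.choose (2*j) * (a - 2*j)! * mm (2*j) * j !) * 2^j := by ring

lemma mm_ne_zero (s : ℕ) : (mm s : ℚ) ≠ 0 := by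
  exact_mod_cast (mm_pos s).ne'

lemma prod_inv (n : ℕ) : ∀ r, 2*r ≤ n + 1 →
    ∏ k ∈ Finset.range r, (1 / ((n:ℚ) - 2*k)) = (mm (n + 1 - 2*r) : ℚ) / mm (n+1) := by
  intro r
  induction r with
  | zero => simp [div_self (mm_ne_zero (n+1))]
  | succ r ih =>
    intro hr
    rw [Finset.prod_range_succ, ih (by omega)]
    have e : n + 1 - 2*r = (n - (2*r+1)) + 2 := by omega
    have e2 : n + 1 - 2*(r+1) = n - (2*r+1) := by omega
    rw [e, e2, mm_succ_succ]
    have hc : ((n:ℚ) - 2*r) = ((n - (2*r+1) + 1 : ℕ) : ℚ) := by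
      push_cast [Nat.cast_sub (show 2*r+1 ≤ n by omega)]
      ring
    rw [hc]
    have h0 : ((n - (2*r+1) : ℕ) : ℚ) + 1 ≠ 0 := by positivity
    have hM := mm_ne_zero (n+1)
    push_cast
    field_simp

lemma P_eq (I : ℕ) : ∀ S : ℕ, 1 ≤ S → (I ≤ S ∨ Even (I + S)) →
    P I S = (I : ℚ) / ((I : ℚ) + (S : ℚ) - 1) := by
  induction I using Nat.strong_induction_on with
  | _ I ih =>
    match I with
    | 0 => intro S _ _; simp [P]
    | 1 =>
      intro S hS _
      match S with
      | s + 1 =>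
        have h0 : P 0 s = 0 := by simp [P]
        rw [P, h0]
        push_cast
        simp only [zero_add, zero_div, zero_mul, mul_zero, add_zero]
        norm_num
    | I + 2 =>
      intro S hS hyp
      match S with
      | s + 1 =>
        rw [P]
        simp only [Nat.add_sub_cancel]
        match s with
        | 0 =>
          have hev : Even (I + 2 + 1) := by
            rcases hyp with h | h; · omega
            · exact h
          have hI1 : 1 ≤ I := by
            rcases Nat.eq_zero_or_pos I with h0 | h1
            · subst h0; exact absurd hev (by decide)
            · exact h1
          have h3 : P I 1 = (I : ℚ) / ((I : ℚ) + 1 - 1) := by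
            apply ih I (by omega) 1 le_rfl
            right
            simp only [Nat.even_iff] at hev ⊢
            omega
          have h2 : P (I+1) 0 = 0 := by simp [P]
          rw [h2, h3]
          have hIQ : (I : ℚ) ≠ 0 := Nat.cast_ne_zero.mpr (by omega)
          have hD : ((I:ℚ) + 1 + 1) ≠ 0 := by positivity
          push_cast
          have hD2 : ((I:ℚ) + 2) ≠ 0 := by positivity
          simp only [add_sub_cancel_right]
          field_simp
          ring
        | t + 1 =>
          have h2 : P (I+1) (t+1) = ((I+1 : ℕ) : ℚ) / (((I+1:ℕ) : ℚ) + ((t+1:ℕ) : ℚ) - 1) := by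
            apply ih (I+1) (by omega) (t+1) (by omega)
            rcases hyp with h | h
            · left; omega
            · right; simp only [Nat.even_iff] at h ⊢; omega
          have h3 : P I (t+1+1) = ((I : ℕ) : ℚ) / (((I:ℕ) : ℚ) + ((t+1+1:ℕ) : ℚ) - 1) := by
            apply ih I (by omega) (t+1+1) (by omega)
            rcases hyp with h | h
            · left; omega
            · right; simp only [Nat.even_iff] at h ⊢; omega
          rw [h2, h3]
          push_cast
          have hD1 : ((I:ℚ) + (t:ℚ) + 1) ≠ 0 := by positivity
          have hD2 : ((I:ℚ) + (t:ℚ) + 3) ≠ 0 := by positivity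
          have e1 : (I:ℚ) + 1 + (↑t + 1) + 1 = (↑I + ↑t + 3) := by ring
          have e2 : (I:ℚ) + 1 + (↑t + 1) - 1 = (↑I + ↑t + 1) := by ring
          have e3 : (I:ℚ) + (↑t + 1 + 1) - 1 = (↑I + ↑t + 1) := by ring
          have e4 : (I:ℚ) + 2 + (↑t + 1 + 1) - 1 = (↑I + ↑t + 3) := by ring
          rw [e1, e2, e3, e4]
          field_simp
          ring

lemma T_zero2 (a b j : ℕ) (h : b < a - 2*j) : T a b j = 0 := by
  simp [T, Nat.choose_eq_zero_of_lt h]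


open Nat in
/-- Closed form for `P I S` outside of the degenerate configuration. -/
theorem stmt_1 (I S : ℕ) (hI : 1 ≤ I) (hS : 1 ≤ S) (h : I ≤ S ∨ Even (I + S)) :
    P I S =
      ∑ j ∈ Finset.Icc (if S < I then (I - S) / 2 else 0) (I / 2),
        (∏ k ∈ Finset.range (I - j), (1 / ((I : ℚ) + (S : ℚ) - 1 - 2 * (k : ℚ)))) *
          ((1 / (j ! : ℚ)) * ∏ k ∈ Finset.range j, ((I - 2 * k).choose 2 : ℚ)) *
          (((I - 2 * j) ! : ℚ) *
            (if 2 * j < I then ((S - 1).choose (I - 1 - 2 * j) : ℚ) else 0)) := by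
  obtain ⟨a, rfl⟩ : ∃ a, I = a + 1 := ⟨I - 1, by omega⟩
  obtain ⟨b, rfl⟩ : ∃ b, S = b + 1 := ⟨S - 1, by omega⟩
  have hyp' : a ≤ b ∨ Even (a + b) := by
    rcases h with h | h
    · left; omega
    · right; simp only [Nat.even_iff] at h ⊢; omega
  rw [P_eq (a+1) (b+1) (by omega) h]
  have key : ∀ j ∈ Finset.Icc (if b + 1 < a + 1 then (a + 1 - (b + 1)) / 2 else 0) ((a+1) / 2),
      (∏ k ∈ Finset.range (a + 1 - j), (1 / ((↑(a+1) : ℚ) + (↑(b+1) : ℚ) - 1 - 2 * (k : ℚ)))) *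
        ((1 / ((j ! : ℕ) : ℚ)) * ∏ k ∈ Finset.range j, ((a + 1 - 2 * k).choose 2 : ℚ)) *
        (((a + 1 - 2 * j)! : ℚ) *
          (if 2 * j < a + 1 then ((b + 1 - 1).choose (a + 1 - 1 - 2 * j) : ℚ) else 0))
      = ((a+1 : ℕ) : ℚ) * ((T a b j : ℕ) : ℚ) / ((mm (a+b+2) : ℕ) : ℚ) := by
    intro j hj
    simp only [Finset.mem_Icc] at hj
    have hja : 2 * j ≤ a + 1 := by omega
    by_cases h2j : 2 * j < a + 1
    · -- main case
      have hbj : a ≤ b + 2 * j := by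
        by_cases hba : b + 1 < a + 1
        · rw [if_pos hba] at hj
          rcases hyp' with hle | hev
          · omega
          · simp only [Nat.even_iff] at hev; omega
        · omega
      rw [if_pos h2j]
      have hp : (∏ k ∈ Finset.range (a + 1 - j),
            (1 / ((↑(a+1) : ℚ) + (↑(b+1) : ℚ) - 1 - 2 * (k : ℚ))))
          = (mm ((a+b+1) + 1 - 2*(a+1-j)) : ℚ) / mm ((a+b+1)+1) := by
        rw [← prod_inv (a+b+1) (a+1-j) (by omega)]
        refine Finset.prod_congr rfl fun k _ => ?_
        congr 1
        push_cast
        ring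
      have e5 : (a+b+1) + 1 - 2*(a+1-j) = b - (a - 2*j) := by omega
      have e6 : (a+b+1) + 1 = a+b+2 := by omega
      rw [hp, e5, e6]
      have e7 : b + 1 - 1 = b := by omega
      have e8 : a + 1 - 1 - 2*j = a - 2*j := by omega
      rw [e7, e8]
      have hid : (∏ k ∈ Finset.range j, (a + 1 - 2*k).choose 2) * (a + 1 - 2*j)!
          = (a+1) * a.choose (2*j) * (a - 2*j)! * mm (2*j) * j ! := by
        rw [prod_choose a j (by omega)]; ring
      have hidQ : (∏ k ∈ Finset.range j, ((a + 1 - 2*k).choose 2 : ℚ)) * (((a + 1 - 2*j)! : ℕ) : ℚ)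
          = ((a : ℚ) + 1) * ((a.choose (2*j) : ℕ) : ℚ) * (((a - 2*j)! : ℕ) : ℚ) *
            ((mm (2*j) : ℕ) : ℚ) * ((j ! : ℕ) : ℚ) := by
        have := congrArg (Nat.cast : ℕ → ℚ) hid
        push_cast at this
        exact this
      have hT : ((T a b j : ℕ) : ℚ)
          = ((a.choose (2*j) : ℕ) : ℚ) * ((b.choose (a - 2*j) : ℕ) : ℚ) *
            (((a - 2*j)! : ℕ) : ℚ) * ((mm (2*j) : ℕ) : ℚ) * ((mm (b - (a - 2*j)) : ℕ) : ℚ) := by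
        rw [T]; push_cast; ring
      rw [hT]
      have hF : ((j ! : ℕ) : ℚ) ≠ 0 := Nat.cast_ne_zero.mpr (Nat.factorial_ne_zero j)
      have hM := mm_ne_zero (a+b+2)
      push_cast
      field_simp
      linear_combination ((mm (b - (a - 2*j)) : ℕ) : ℚ) * ((b.choose (a - 2*j) : ℕ) : ℚ) * hidQ
    · -- 2*j = a+1, both sides zero
      rw [if_neg h2j]
      have : a < 2*j := by omega
      rw [T_high a b j this]
      simp
  rw [Finset.sum_congr rfl key]
  have hsum : ∑ j ∈ Finset.Icc (if b + 1 < a + 1 then (a + 1 - (b + 1)) / 2 else 0) ((a+1) / 2),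
      T a b j = f a b := by
    rw [f]
    rw [Finset.sum_subset (show Finset.Icc (if b + 1 < a + 1 then (a + 1 - (b + 1)) / 2 else 0)
        ((a+1)/2) ⊆ Finset.range (a/2 + 2) from ?_) ?_]
    · rw [Finset.sum_range_succ, T_high a b (a/2+1) (by omega), add_zero]
    · intro j hj
      simp only [Finset.mem_Icc] at hj
      simp only [Finset.mem_range]
      omega
    · intro j hj hnot
      simp only [Finset.mem_range] at hj
      simp only [Finset.mem_Icc, not_and, not_le] at hnot
      by_cases hja : j ≤ (a+1)/2
      · -- then j < L, so b+1 < a+1 and j < (a-b)/2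
        by_cases hba : b + 1 < a + 1
        · rw [if_pos hba] at hnot
          have hjL : j < (a + 1 - (b+1)) / 2 := by
            rcases Nat.lt_or_ge j ((a + 1 - (b + 1)) / 2) with h' | h'
            · exact h'
            · exact absurd (hnot h') (by omega)
          exact T_zero2 a b j (by omega)
        · rw [if_neg hba] at hnot
          have := hnot (Nat.zero_le j)
          omega
      · exact T_high a b j (by omega)
  rw [← Finset.sum_div, ← Finset.mul_sum, ← Nat.cast_sum, hsum, f_eq a b hyp',
    show a + b + 2 = (a+b) + 2 from rfl, mm_succ_succ (a+b)]
  have hB : ((a+1 : ℕ) : ℚ) + ((b+1 : ℕ) : ℚ) - 1 ≠ 0 := by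
    have e : ((a+1 : ℕ) : ℚ) + ((b+1 : ℕ) : ℚ) - 1 = (a:ℚ) + (b:ℚ) + 1 := by push_cast; ring
    rw [e]; positivity
  have hD' : (((a+b+1) * mm (a+b) : ℕ) : ℚ) ≠ 0 :=
    Nat.cast_ne_zero.mpr (Nat.mul_ne_zero (by omega) (mm_pos (a+b)).ne')
  rw [div_eq_div_iff hB hD']
  push_cast
  ring
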